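/- Let D be the N×K matrix with entries d_{i,j} = ⟨p_j − r_i, n_j⟩, where r_1,…,r_N ∈ ℝ^d are measurement points, n_1,…,n_K ∈ ℝ^d are unit wall normals, and p_1,…,p_K ∈ ℝ^d are wall points. Then rank(D) ≤ d + 1. -/

import Mathlib

open RealInnerProductSpace

lemma matrix_rank_add_le {m n : Type*} [Fintype m] [Fintype n] [DecidableEq n]
    (A B : Matrix m n ℝ) : (A + B).rank ≤ A.rank + B.rank := by
  have hrange : LinearMap.range (A + B).mulVecLin ≤
      LinearMap.range A.mulVecLin ⊔ LinearMap.range B.mulVecLin := by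
    rintro x ⟨v, rfl⟩
    rw [Matrix.mulVecLin_add]
    exact Submodule.add_mem_sup ⟨v, rfl⟩ ⟨v, rfl⟩
  calc (A + B).rank ≤ Module.finrank ℝ
        ↥(LinearMap.range A.mulVecLin ⊔ LinearMap.range B.mulVecLin) :=
        Submodule.finrank_mono hrange
    _ ≤ A.rank + B.rank := by
        have := Submodule.finrank_sup_add_finrank_inf_eq
          (LinearMap.range A.mulVecLin) (LinearMap.range B.mulVecLin)
        unfold Matrix.rank
        omega

/-- The matrix of wall distances `d_{i,j} = ⟪p_j − r_i, n_j⟫` has rank at most `d + 1`. -/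
theorem rank_distance_matrix_le (d N K : ℕ)
    (r : Fin N → EuclideanSpace ℝ (Fin d))
    (n p : Fin K → EuclideanSpace ℝ (Fin d))
    (hn : ∀ j, ‖n j‖ = 1)
    (D : Matrix (Fin N) (Fin K) ℝ)
    (hD : ∀ i j, D i j = ⟪p j - r i, n j⟫) :
    D.rank ≤ d + 1 := by
  set A : Matrix (Fin N) (Fin K) ℝ :=
    (Matrix.of fun i k => -(r i k)) * (Matrix.of fun k j => n j k) with hA
  set B : Matrix (Fin N) (Fin K) ℝ :=
    (Matrix.of fun (_ : Fin N) (_ : Fin 1) => (1 : ℝ)) *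
      (Matrix.of fun (_ : Fin 1) j => ⟪p j, n j⟫) with hB
  have hDAB : D = A + B := by
    ext i j
    simp only [hD, hA, hB, Matrix.add_apply, Matrix.mul_apply, Matrix.of_apply,
      inner_sub_left, PiLp.inner_apply, RCLike.inner_apply, starRingEnd_apply,
      Finset.sum_singleton, Fin.sum_univ_one]
    simp only [star_trivial, one_mul, sub_mul, neg_mul, Finset.sum_sub_distrib,
      Finset.sum_neg_distrib]
    rw [Finset.sum_congr rfl fun x _ => mul_comm ((r i).ofLp x) ((n j).ofLp x)]
    ring
  have hAr : A.rank ≤ d := (Matrix.rank_mul_le_right _ _).trans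
    ((Matrix.rank_le_card_height _).trans (by simp))
  have hBr : B.rank ≤ 1 := (Matrix.rank_mul_le_right _ _).trans
    ((Matrix.rank_le_card_height _).trans (by simp))
  calc D.rank = (A + B).rank := by rw [hDAB]
    _ ≤ A.rank + B.rank := matrix_rank_add_le A B
    _ ≤ d + 1 := add_le_add hAr hBr
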